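/- One-step contraction for proximal VR step: let φ be μ-strongly convex and L-smooth, R convex, Q(w) = φ(w) + R(w) with minimizer w★. Suppose v is a random vector with E[v | u] = ∇φ(u), and set u⁺ = prox_{R,η}(u - ηv) with 0 < η ≤ 1/L. Then E‖u⁺ - w★‖² ≤ (1 - μη)‖u - w★‖² + 2η²E‖v - ∇φ(u)‖² + 2η(Q(w★) - E Q(u⁺)). -/

import Mathlib

open scoped RealInnerProductSpace

lemma prox_first_order {E : Type*} [NormedAddCommGroup E] [InnerProductSpace ℝ E]
    (R : E → ℝ) (hR : ConvexOn ℝ Set.univ R) (η : ℝ) (hη : 0 < η)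
    (x p : E) (hp : IsMinOn (fun z => R z + 1 / (2 * η) * ‖z - x‖ ^ 2) Set.univ p)
    (z : E) : ⟪x - p, z - p⟫ ≤ η * (R z - R p) := by
  set I : ℝ := ⟪p - x, z - p⟫ with hI
  set B : ℝ := 1 / (2 * η) * ‖z - p‖ ^ 2 with hB
  have hBnn : 0 ≤ B := by positivity
  have key : ∀ t : ℝ, 0 < t → t ≤ 1 →
      0 ≤ (R z - R p + (1 / η) * I) + t * B := by
    intro t ht ht1
    have hmin := hp (Set.mem_univ (p + t • (z - p)))
    simp only [Set.mem_setOf_eq] at hmin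
    have hpt : p + t • (z - p) = (1 - t) • p + t • z := by
      rw [smul_sub, sub_smul, one_smul]; abel
    have hconv : R ((1 - t) • p + t • z) ≤ (1 - t) * R p + t * R z :=
      hR.2 (Set.mem_univ p) (Set.mem_univ z) (by linarith) (le_of_lt ht) (by ring)
    have hq : ‖p + t • (z - p) - x‖ ^ 2
        = ‖p - x‖ ^ 2 + 2 * (t * I) + t ^ 2 * ‖z - p‖ ^ 2 := by
      have : p + t • (z - p) - x = (p - x) + t • (z - p) := by abel
      rw [this, norm_add_sq_real, real_inner_smul_right, norm_smul]
      simp [Real.norm_eq_abs, mul_pow, sq_abs]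
      left; rfl
    rw [hpt] at hmin
    have h0 : 0 ≤ t * ((R z - R p + (1 / η) * I) + t * B) := by
      have expand : R p + 1 / (2 * η) * ‖p - x‖ ^ 2
          ≤ (1 - t) * R p + t * R z
            + 1 / (2 * η) * (‖p - x‖ ^ 2 + 2 * (t * I) + t ^ 2 * ‖z - p‖ ^ 2) := by
        calc R p + 1 / (2 * η) * ‖p - x‖ ^ 2
            ≤ R ((1 - t) • p + t • z) + 1 / (2 * η) * ‖(1 - t) • p + t • z - x‖ ^ 2 := hmin
          _ ≤ (1 - t) * R p + t * R z + 1 / (2 * η) * ‖(1 - t) • p + t • z - x‖ ^ 2 := by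
              linarith
          _ = (1 - t) * R p + t * R z
              + 1 / (2 * η) * (‖p - x‖ ^ 2 + 2 * (t * I) + t ^ 2 * ‖z - p‖ ^ 2) := by
              rw [← hpt, hq]
      have : t * ((R z - R p + (1 / η) * I) + t * B)
          = ((1 - t) * R p + t * R z
            + 1 / (2 * η) * (‖p - x‖ ^ 2 + 2 * (t * I) + t ^ 2 * ‖z - p‖ ^ 2))
            - (R p + 1 / (2 * η) * ‖p - x‖ ^ 2) := by
        rw [hB]; field_simp
        ring
      linarith [this ▸ (sub_nonneg.mpr expand)]
    exact nonneg_of_mul_nonneg_right h0 ht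
  have hA : 0 ≤ R z - R p + (1 / η) * I := by
    by_contra h
    push_neg at h
    set A : ℝ := R z - R p + (1 / η) * I with hAdef
    have hBpos : 0 < B + 1 := by linarith
    set t : ℝ := min 1 ((-A) / (B + 1)) with htdef
    have ht0 : 0 < t := by
      apply lt_min one_pos
      apply div_pos (by linarith) hBpos
    have ht1 : t ≤ 1 := min_le_left _ _
    have htB : t * B ≤ (-A) / (B + 1) * B := by
      exact mul_le_mul_of_nonneg_right (min_le_right _ _) hBnn
    have hlt : (-A) / (B + 1) * B < -A := by
      rw [div_mul_eq_mul_div, div_lt_iff₀ hBpos]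
      nlinarith
    have hk := key t ht0 ht1
    clear_value I B A t
    linarith
  have hflip : ⟪x - p, z - p⟫ = -I := by
    rw [hI, ← inner_neg_left, neg_sub]
  rw [hflip]
  have := mul_le_mul_of_nonneg_left hA (le_of_lt hη)
  have hηI : η * ((1 / η) * I) = I := by field_simp
  nlinarith [this]

lemma prox_nonexpansive {E : Type*} [NormedAddCommGroup E] [InnerProductSpace ℝ E]
    (R : E → ℝ) (hR : ConvexOn ℝ Set.univ R) (η : ℝ) (hη : 0 < η)
    (x y p q : E)
    (hp : IsMinOn (fun z => R z + 1 / (2 * η) * ‖z - x‖ ^ 2) Set.univ p)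
    (hq : IsMinOn (fun z => R z + 1 / (2 * η) * ‖z - y‖ ^ 2) Set.univ q) :
    ‖p - q‖ ≤ ‖x - y‖ := by
  have h1 := prox_first_order R hR η hη x p hp q
  have h2 := prox_first_order R hR η hη y q hq p
  have h2' : -⟪y - q, q - p⟫ ≤ η * (R p - R q) := by
    rw [← inner_neg_right, neg_sub]; exact h2
  have hsum : 0 ≤ ⟪(y - q) - (x - p), q - p⟫ := by
    rw [inner_sub_left]; linarith
  have hid : (y - q) - (x - p) = (y - x) - (q - p) := by abel
  rw [hid, inner_sub_left, real_inner_self_eq_norm_sq] at hsum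
  have hcs : ⟪y - x, q - p⟫ ≤ ‖y - x‖ * ‖q - p‖ := real_inner_le_norm _ _
  have hqp : ‖q - p‖ ^ 2 ≤ ‖y - x‖ * ‖q - p‖ := by linarith
  have : ‖q - p‖ ≤ ‖y - x‖ := by
    rcases eq_or_lt_of_le (norm_nonneg (q - p)) with h | h
    · rw [← h]; exact norm_nonneg _
    · nlinarith
  calc ‖p - q‖ = ‖q - p‖ := norm_sub_rev _ _
    _ ≤ ‖y - x‖ := this
    _ = ‖x - y‖ := norm_sub_rev _ _

lemma noise_coupling {E : Type*} [NormedAddCommGroup E] [InnerProductSpace ℝ E]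
    {n : ℕ} (hn : 0 < n) (Δ q : Fin n → E) (w : E) (η : ℝ) (hη : 0 ≤ η)
    (hΔ0 : ∑ i, Δ i = 0)
    (hnon : ∀ i j, ‖q i - q j‖ ≤ η * ‖Δ i - Δ j‖) :
    ∑ i, ⟪Δ i, w - q i⟫ ≤ η * ∑ i, ‖Δ i‖ ^ 2 := by
  have hn' : (0 : ℝ) < n := by exact_mod_cast hn
  have hA : ∑ i, ⟪Δ i, w - q i⟫ = - ∑ i, ⟪Δ i, q i⟫ := by
    simp only [inner_sub_right]
    rw [Finset.sum_sub_distrib, ← sum_inner, hΔ0]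
    simp
  have hT : ∑ i, ∑ j, ⟪Δ i - Δ j, q j - q i⟫
      = -2 * (n : ℝ) * ∑ i, ⟪Δ i, q i⟫ := by
    have expand : ∀ i j : Fin n, ⟪Δ i - Δ j, q j - q i⟫
        = ⟪Δ i, q j⟫ - ⟪Δ i, q i⟫ - ⟪Δ j, q j⟫ + ⟪Δ j, q i⟫ := by
      intro i j
      rw [inner_sub_left, inner_sub_right, inner_sub_right]
      ring
    simp only [expand]
    simp only [Finset.sum_add_distrib, Finset.sum_sub_distrib]
    have h00 : ∑ i : Fin n, ∑ j : Fin n, ⟪Δ i, q j⟫ = 0 := by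
      have h' : ∀ i : Fin n, ∑ j : Fin n, ⟪Δ i, q j⟫ = ⟪Δ i, ∑ j, q j⟫ := by
        intro i; rw [inner_sum]
      simp only [h']
      rw [← sum_inner, hΔ0, inner_zero_left]
    have h01 : ∑ i : Fin n, ∑ j : Fin n, ⟪Δ j, q i⟫ = 0 := by
      have h' : ∀ i : Fin n, ∑ j : Fin n, ⟪Δ j, q i⟫ = ⟪∑ j, Δ j, q i⟫ := by
        intro i; rw [sum_inner]
      simp only [h', hΔ0, inner_zero_left, Finset.sum_const_zero]
    have h02 : ∑ _i : Fin n, ∑ j : Fin n, ⟪Δ j, q j⟫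
        = (n : ℝ) * ∑ j, ⟪Δ j, q j⟫ := by
      rw [Finset.sum_const, Finset.card_univ, Fintype.card_fin, nsmul_eq_mul]
    have h03 : ∑ i : Fin n, ∑ _j : Fin n, ⟪Δ i, q i⟫
        = (n : ℝ) * ∑ i, ⟪Δ i, q i⟫ := by
      simp only [Finset.sum_const, Finset.card_univ, Fintype.card_fin, nsmul_eq_mul]
      rw [← Finset.mul_sum]
    rw [h00, h01, h02, h03]
    ring
  have hTle : ∑ i, ∑ j, ⟪Δ i - Δ j, q j - q i⟫
      ≤ η * ∑ i, ∑ j, ‖Δ i - Δ j‖ ^ 2 := by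
    rw [Finset.mul_sum]
    apply Finset.sum_le_sum
    intro i _
    rw [Finset.mul_sum]
    apply Finset.sum_le_sum
    intro j _
    calc ⟪Δ i - Δ j, q j - q i⟫ ≤ ‖Δ i - Δ j‖ * ‖q j - q i‖ := real_inner_le_norm _ _
      _ ≤ ‖Δ i - Δ j‖ * (η * ‖Δ j - Δ i‖) := by
          apply mul_le_mul_of_nonneg_left _ (norm_nonneg _)
          exact hnon j i
      _ = η * ‖Δ i - Δ j‖ ^ 2 := by
          rw [norm_sub_rev (Δ j) (Δ i)]; ring
  have hsq : ∑ i, ∑ j, ‖Δ i - Δ j‖ ^ 2 = 2 * (n : ℝ) * ∑ i, ‖Δ i‖ ^ 2 := by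
    have expand : ∀ i j : Fin n, ‖Δ i - Δ j‖ ^ 2
        = ‖Δ i‖ ^ 2 - 2 * ⟪Δ i, Δ j⟫ + ‖Δ j‖ ^ 2 := fun i j => norm_sub_sq_real _ _
    simp only [expand]
    simp only [Finset.sum_add_distrib, Finset.sum_sub_distrib]
    have h00 : ∑ i : Fin n, ∑ j : Fin n, 2 * ⟪Δ i, Δ j⟫ = 0 := by
      have h' : ∀ i : Fin n, ∑ j : Fin n, 2 * ⟪Δ i, Δ j⟫ = 2 * ⟪Δ i, ∑ j, Δ j⟫ := by
        intro i; rw [inner_sum, Finset.mul_sum]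
      simp only [h', hΔ0, inner_zero_right, mul_zero, Finset.sum_const_zero]
    rw [h00]
    simp only [Finset.sum_const, Finset.card_univ, Fintype.card_fin, nsmul_eq_mul]
    rw [← Finset.mul_sum]
    ring
  rw [hA]
  rw [hT, hsq] at hTle
  have h2n : (0 : ℝ) < 2 * n := by positivity
  exact (mul_le_mul_iff_right₀ h2n).mp (by linarith : (2 * (n : ℝ)) * (- ∑ i, ⟪Δ i, q i⟫)
    ≤ (2 * (n : ℝ)) * (η * ∑ i, ‖Δ i‖ ^ 2))


set_option maxHeartbeats 1000000 in
/-- One-step contraction for the proximal variance-reduced step: with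
`E[v] = ∇φ(u)` (expectation over a uniform finite sample) and
`u⁺ = prox_{R,η}(u - ηv)` for `0 < η ≤ 1/L`,
`E‖u⁺ - w★‖² ≤ (1-μη)‖u - w★‖² + 2η²E‖v - ∇φ(u)‖² + 2η(Q(w★) - E Q(u⁺))`. -/
theorem prox_vr_one_step_contraction
    (d n : ℕ) (hn : 0 < n)
    (φ R : EuclideanSpace ℝ (Fin d) → ℝ)
    (gφ : EuclideanSpace ℝ (Fin d) → EuclideanSpace ℝ (Fin d))
    (μ L η : ℝ) (hμ : 0 < μ) (hη : 0 < η) (hηL : η ≤ 1 / L) (hL : 0 < L)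
    (hgrad : ∀ x, HasGradientAt φ (gφ x) x)
    (hsc : ∀ a b, φ b ≥ φ a + inner ℝ (gφ a) (b - a) + μ / 2 * ‖a - b‖ ^ 2)
    (hsmooth : ∀ a b, φ b ≤ φ a + inner ℝ (gφ a) (b - a) + L / 2 * ‖a - b‖ ^ 2)
    (hR : ConvexOn ℝ Set.univ R)
    (wstar : EuclideanSpace ℝ (Fin d))
    (hwstar : IsMinOn (fun w => φ w + R w) Set.univ wstar)
    (u : EuclideanSpace ℝ (Fin d))
    (v : Fin n → EuclideanSpace ℝ (Fin d))
    (hv : (1 / (n : ℝ)) • ∑ i, v i = gφ u)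
    (uplus : Fin n → EuclideanSpace ℝ (Fin d))
    (huplus : ∀ i, IsMinOn
      (fun z => R z + 1 / (2 * η) * ‖z - (u - η • v i)‖ ^ 2) Set.univ (uplus i)) :
    (1 / (n : ℝ)) * ∑ i, ‖uplus i - wstar‖ ^ 2
      ≤ (1 - μ * η) * ‖u - wstar‖ ^ 2
        + 2 * η ^ 2 * ((1 / (n : ℝ)) * ∑ i, ‖v i - gφ u‖ ^ 2)
        + 2 * η * ((φ wstar + R wstar) -
            (1 / (n : ℝ)) * ∑ i, (φ (uplus i) + R (uplus i))) := by
  classical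
  have hn' : (0 : ℝ) < n := by exact_mod_cast hn
  have hLη : L * η ≤ 1 := by
    have := (le_div_iff₀ hL).mp hηL
    linarith
  -- sum of noise vanishes
  have hsumv : ∑ i, v i = (n : ℝ) • gφ u := by
    have h := congrArg (fun s : EuclideanSpace ℝ (Fin d) => (n : ℝ) • s) hv
    simp only [smul_smul] at h
    rw [mul_one_div, div_self hn'.ne', one_smul] at h
    exact h
  have hΔ0 : ∑ i, (v i - gφ u) = 0 := by
    rw [Finset.sum_sub_distrib, hsumv, Finset.sum_const, Finset.card_univ,
      Fintype.card_fin, ← Nat.cast_smul_eq_nsmul ℝ, sub_self]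
  -- per-index contraction
  have key : ∀ i, ‖uplus i - wstar‖ ^ 2
      ≤ (1 - μ * η) * ‖u - wstar‖ ^ 2
        + 2 * η * ⟪v i - gφ u, wstar - uplus i⟫
        + 2 * η * ((φ wstar + R wstar) - (φ (uplus i) + R (uplus i))) := by
    intro i
    set p := uplus i with hp
    have h1 := prox_first_order R hR η hη (u - η • v i) p (huplus i) wstar
    -- expand the left inner product
    have e0 : u - η • v i - p = (u - p) - η • v i := by abel
    have e1 : ⟪u - η • v i - p, wstar - p⟫
        = ⟪u - p, wstar - p⟫ - η * ⟪v i, wstar - p⟫ := by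
      rw [e0, inner_sub_left, real_inner_smul_left]
    have e2 : ⟪v i, wstar - p⟫
        = ⟪v i - gφ u, wstar - p⟫ + ⟪gφ u, wstar - u⟫ + ⟪gφ u, u - p⟫ := by
      have hwp : wstar - p = (wstar - u) + (u - p) := by abel
      rw [hwp]
      simp only [inner_sub_left, inner_add_right]
      ring
    have e4 : 2 * ⟪u - p, wstar - p⟫
        = ‖u - p‖ ^ 2 + ‖wstar - p‖ ^ 2 - ‖u - wstar‖ ^ 2 := by
      have hid : (u - p) - (wstar - p) = u - wstar := by abel
      have := norm_sub_sq_real (u - p) (wstar - p)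
      rw [hid] at this
      linarith
    have h2 := hsc u wstar
    have h3 := hsmooth u p
    have h3' : ⟪gφ u, u - p⟫ = -⟪gφ u, p - u⟫ := by
      rw [← inner_neg_right, neg_sub]
    have hf6 : L * η * ‖u - p‖ ^ 2 ≤ ‖u - p‖ ^ 2 := by
      have := mul_le_mul_of_nonneg_right hLη (sq_nonneg ‖u - p‖)
      linarith
    have h2' : (2 * η) * ⟪gφ u, wstar - u⟫
        ≤ (2 * η) * (φ wstar - φ u - μ / 2 * ‖u - wstar‖ ^ 2) := by
      apply mul_le_mul_of_nonneg_left _ (by positivity)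
      have : (inner ℝ (gφ u) (wstar - u) : ℝ) = ⟪gφ u, wstar - u⟫ := rfl
      linarith [h2]
    have h3'' : (2 * η) * ⟪gφ u, u - p⟫
        ≤ (2 * η) * (φ u - φ p + L / 2 * ‖u - p‖ ^ 2) := by
      apply mul_le_mul_of_nonneg_left _ (by positivity)
      rw [h3']
      have : (inner ℝ (gφ u) (p - u) : ℝ) = ⟪gφ u, p - u⟫ := rfl
      linarith [h3]
    have hW : ‖uplus i - wstar‖ ^ 2 = ‖wstar - p‖ ^ 2 := by
      rw [hp, norm_sub_rev]
    rw [hW]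
    rw [e1, e2] at h1
    nlinarith [h1, e4, h2', h3'', hf6, hη]
  -- noise coupling bound
  have hnon : ∀ i j, ‖uplus i - uplus j‖ ≤ η * ‖(v i - gφ u) - (v j - gφ u)‖ := by
    intro i j
    have := prox_nonexpansive R hR η hη (u - η • v i) (u - η • v j)
      (uplus i) (uplus j) (huplus i) (huplus j)
    have hx : (u - η • v i) - (u - η • v j) = η • (v j - v i) := by
      rw [smul_sub]; abel
    rw [hx, norm_smul, Real.norm_eq_abs, abs_of_pos hη] at this
    have hvv : ‖v j - v i‖ = ‖(v i - gφ u) - (v j - gφ u)‖ := by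
      rw [norm_sub_rev]
      congr 1
      abel
    rw [hvv] at this
    exact this
  have hnoise : ∑ i, ⟪v i - gφ u, wstar - uplus i⟫
      ≤ η * ∑ i, ‖v i - gφ u‖ ^ 2 := by
    apply noise_coupling hn (fun i => v i - gφ u) uplus wstar η (le_of_lt hη) hΔ0
    intro i j
    exact hnon i j
  -- combine
  have hsumkey : ∑ i, ‖uplus i - wstar‖ ^ 2
      ≤ (n : ℝ) * ((1 - μ * η) * ‖u - wstar‖ ^ 2)
        + 2 * η * (η * ∑ i, ‖v i - gφ u‖ ^ 2)
        + 2 * η * ((n : ℝ) * (φ wstar + R wstar) - ∑ i, (φ (uplus i) + R (uplus i))) := by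
    have hsum1 : ∑ i, ‖uplus i - wstar‖ ^ 2
        ≤ ∑ i, ((1 - μ * η) * ‖u - wstar‖ ^ 2
          + 2 * η * ⟪v i - gφ u, wstar - uplus i⟫
          + 2 * η * ((φ wstar + R wstar) - (φ (uplus i) + R (uplus i)))) :=
      Finset.sum_le_sum (fun i _ => key i)
    have hsum2 : ∑ i, ((1 - μ * η) * ‖u - wstar‖ ^ 2
          + 2 * η * ⟪v i - gφ u, wstar - uplus i⟫
          + 2 * η * ((φ wstar + R wstar) - (φ (uplus i) + R (uplus i))))
        = (n : ℝ) * ((1 - μ * η) * ‖u - wstar‖ ^ 2)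
          + 2 * η * ∑ i, ⟪v i - gφ u, wstar - uplus i⟫
          + 2 * η * ((n : ℝ) * (φ wstar + R wstar) - ∑ i, (φ (uplus i) + R (uplus i))) := by
      simp only [Finset.sum_add_distrib, Finset.sum_sub_distrib, ← Finset.mul_sum,
        Finset.sum_const, Finset.card_univ, Fintype.card_fin, nsmul_eq_mul]
      ring
    have hns := mul_le_mul_of_nonneg_left hnoise (by positivity : (0:ℝ) ≤ 2 * η)
    rw [hsum2] at hsum1
    linarith [hsum1, hns]
  have hfin := mul_le_mul_of_nonneg_left hsumkey
    (le_of_lt (by positivity : (0 : ℝ) < 1 / n))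
  have heq : (1 / (n : ℝ)) * ((n : ℝ) * ((1 - μ * η) * ‖u - wstar‖ ^ 2)
        + 2 * η * (η * ∑ i, ‖v i - gφ u‖ ^ 2)
        + 2 * η * ((n : ℝ) * (φ wstar + R wstar) - ∑ i, (φ (uplus i) + R (uplus i))))
      = (1 - μ * η) * ‖u - wstar‖ ^ 2
        + 2 * η ^ 2 * ((1 / (n : ℝ)) * ∑ i, ‖v i - gφ u‖ ^ 2)
        + 2 * η * ((φ wstar + R wstar) -
            (1 / (n : ℝ)) * ∑ i, (φ (uplus i) + R (uplus i))) := by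
    field_simp
  rw [heq] at hfin
  linarith [hfin]
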